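/- Let H = (X, F) be a hypergraph with nonempty hyperedge set and let G = G(H, a) be the graph from the transference construction (vertex set X plus sets X_A of size 4a(|X| + |V(H)|) for each vertex cover A of H; G[X] complete; each w ∈ X_A adjacent exactly to the vertices of A within X). Then the domination number of G equals min{|F| : F ∈ F}. -/

import Mathlib

/-- The vertex covers of the hypergraph `(X, F)`: sets meeting every hyperedge. -/
def vertexCovers {X : Type} (F : Set (Set X)) : Set (Set X) :=
  {A | ∀ e ∈ F, (A ∩ e).Nonempty}

/-- Vertex set of the transference graph `G(H, a)`: the board `X` together with,
for every vertex cover `A`, a set `X_A` of `4a(|X| + |𝒱(H)|)` fresh vertices. -/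
def TVert (X : Type) (F : Set (Set X)) (a : ℕ) : Type :=
  X ⊕ ({A : Set X // A ∈ vertexCovers F} × Fin (4 * a * (Nat.card X + (vertexCovers F).ncard)))

/-- The transference graph `G(H, a)`: `G[X]` is complete, and a fresh vertex of
`X_A` is adjacent exactly to the vertices of the vertex cover `A`. -/
def TGraph (X : Type) (F : Set (Set X)) (a : ℕ) : SimpleGraph (TVert X F a) where
  Adj p q := match p, q with
    | Sum.inl u, Sum.inl v => u ≠ v
    | Sum.inl u, Sum.inr q => u ∈ q.1.1
    | Sum.inr p, Sum.inl v => v ∈ p.1.1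
    | Sum.inr _, Sum.inr _ => False
  symm := by
    constructor
    rintro (u | p) (v | q) h
    · exact Ne.symm h
    · exact h
    · exact h
    · exact h.elim
  loopless := by
    constructor
    rintro (u | p) h
    · exact h rfl
    · exact h

/-- `D` is a dominating set of `G`. -/
def IsDomSet {V : Type} (G : SimpleGraph V) (D : Set V) : Prop :=
  ∀ v, v ∈ D ∨ ∃ u ∈ D, G.Adj u v

/-- The domination number of the transference graph `G(H, a)`
equals the minimum size of a hyperedge of `H = (X, F)`. -/
theorem domination_number_transference {X : Type} [Finite X] (F : Set (Set X)) (a : ℕ)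
    (ha : 1 ≤ a) (hne : F.Nonempty) (hedges : ∀ e ∈ F, e.Nonempty) :
    sInf {n : ℕ | ∃ D : Set (TVert X F a), IsDomSet (TGraph X F a) D ∧ D.ncard = n} =
      sInf {n : ℕ | ∃ e ∈ F, e.ncard = n} := by
  have hXfin : Finite X := inferInstance
  haveI : Finite (TVert X F a) := by unfold TVert; infer_instance
  set R : Set ℕ := {n : ℕ | ∃ e ∈ F, e.ncard = n} with hR
  have hRne : R.Nonempty := ⟨hne.choose.ncard, hne.choose, hne.choose_spec, rfl⟩
  obtain ⟨e₀, he₀F, he₀⟩ := Nat.sInf_mem hRne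
  set k := sInf R with hk
  -- every hyperedge gives a dominating set
  have hdom : ∀ e ∈ F, IsDomSet (TGraph X F a) (Sum.inl '' e) := by
    intro e heF v
    match v with
    | Sum.inl x =>
      by_cases hx : x ∈ e
      · exact Or.inl ⟨x, hx, rfl⟩
      · obtain ⟨y, hy⟩ := hedges e heF
        exact Or.inr ⟨Sum.inl y, ⟨y, hy, rfl⟩, fun h => hx (h ▸ hy)⟩
    | Sum.inr q =>
      obtain ⟨y, hyA, hye⟩ := q.1.2 e heF
      exact Or.inr ⟨Sum.inl y, ⟨y, hye, rfl⟩, hyA⟩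
  set L : Set ℕ :=
    {n : ℕ | ∃ D : Set (TVert X F a), IsDomSet (TGraph X F a) D ∧ D.ncard = n} with hL
  have hLmem : e₀.ncard ∈ L := by
    refine ⟨Sum.inl '' e₀, hdom e₀ he₀F, ?_⟩
    exact Set.ncard_image_of_injective _ Sum.inl_injective
  have hle : sInf L ≤ k := he₀ ▸ Nat.sInf_le hLmem
  refine le_antisymm hle ?_
  -- lower bound
  obtain ⟨D, hD, hDcard⟩ := Nat.sInf_mem (⟨_, hLmem⟩ : L.Nonempty)
  rw [← hDcard]
  by_contra hlt
  push_neg at hlt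
  -- `B` = X-part of D
  set B : Set X := {x | Sum.inl x ∈ D} with hB
  have hBle : B.ncard ≤ D.ncard := by
    have : Sum.inl '' B ⊆ D := by rintro _ ⟨x, hx, rfl⟩; exact hx
    calc B.ncard = (Sum.inl '' B : Set (TVert X F a)).ncard :=
          (Set.ncard_image_of_injective _ Sum.inl_injective).symm
      _ ≤ D.ncard := Set.ncard_le_ncard this (Set.toFinite D)
  -- complement of B is a vertex cover
  have hA : Bᶜ ∈ vertexCovers F := by
    intro e heF
    rw [Set.nonempty_iff_ne_empty]
    intro hemp
    have hsub : e ⊆ B := by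
      intro x hx
      by_contra hxB
      exact (Set.eq_empty_iff_forall_notMem.mp hemp x) ⟨hxB, hx⟩
    have h1 : k ≤ e.ncard := Nat.sInf_le ⟨e, heF, rfl⟩
    have h2 : e.ncard ≤ B.ncard := Set.ncard_le_ncard hsub (Set.toFinite B)
    omega
  -- all of X_{Bᶜ} must be in D
  set N := 4 * a * (Nat.card X + (vertexCovers F).ncard) with hN
  have hall : ∀ i : Fin N, (Sum.inr (⟨Bᶜ, hA⟩, i) : TVert X F a) ∈ D := by
    intro i
    rcases hD (Sum.inr (⟨Bᶜ, hA⟩, i)) with h | ⟨u, huD, hadj⟩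
    · exact h
    · match u with
      | Sum.inl v =>
        have hv : v ∈ Bᶜ := hadj
        exact absurd huD hv
      | Sum.inr q => exact hadj.elim
  have hNle : N ≤ D.ncard := by
    have hsub : Set.range (fun i : Fin N => (Sum.inr (⟨Bᶜ, hA⟩, i) : TVert X F a)) ⊆ D := by
      rintro _ ⟨i, rfl⟩; exact hall i
    have hinj : Function.Injective (fun i : Fin N => (Sum.inr (⟨Bᶜ, hA⟩, i) : TVert X F a)) := by
      intro i j h
      simpa using h
    calc N = Nat.card (Fin N) := (Nat.card_eq_fintype_card.trans (Fintype.card_fin N)).symm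
      _ = Nat.card (Set.range fun i : Fin N => (Sum.inr (⟨Bᶜ, hA⟩, i) : TVert X F a)) :=
          (Nat.card_range_of_injective hinj).symm
      _ = (Set.range fun i : Fin N => (Sum.inr (⟨Bᶜ, hA⟩, i) : TVert X F a)).ncard :=
          Nat.card_coe_set_eq _
      _ ≤ D.ncard := Set.ncard_le_ncard hsub (Set.toFinite D)
  have hkX : k ≤ Nat.card X := by
    have := Set.ncard_le_ncard (Set.subset_univ e₀) Set.finite_univ
    rw [Set.ncard_univ] at this
    omega
  have hXN : Nat.card X ≤ N := by
    have h1 := Nat.mul_le_mul (show 1 ≤ 4 * a by omega)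
      (show Nat.card X ≤ Nat.card X + (vertexCovers F).ncard by omega)
    simpa using h1
  omega
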